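/- arXiv:1211.6638 — 7 statements merged into one kernel-verified Lean document; each statement's English description precedes it below -/
import Mathlib

section
/- Let p be an odd prime and let f be a polynomial with coefficients in ℚ_p (the field of p-adic numbers). Then the sequence of alternating sums N ↦ Σ_{x=0}^{p^N−1} (−1)^x f(x) (where the natural number x is viewed in ℚ_p) converges in ℚ_p as N → ∞; i.e., the fermionic p-adic integral ∫_{ℤ_p} f(x) dμ_{−1}(x) of the polynomial f exists. -/
open Filter Finset

private lemma exists_euler_poly (p : ℕ) [Fact p.Prime] :
    ∀ (n : ℕ) (f : Polynomial ℚ_[p]), f.natDegree ≤ n →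
      ∃ g : Polynomial ℚ_[p], g + g.comp (Polynomial.X + 1) = 2 * f := by
  intro n
  induction n with
  | zero =>
    intro f hf
    refine ⟨f, ?_⟩
    rw [Polynomial.eq_C_of_natDegree_le_zero hf]
    simp
    ring
  | succ n ih =>
    intro f hf
    set c := f.coeff (n + 1) with hc
    set f' := f - (c / 2) • (Polynomial.X ^ (n + 1) + (Polynomial.X + 1) ^ (n + 1)) with hf'
    have hdeg : f'.natDegree ≤ n := by
      rw [Polynomial.natDegree_le_iff_coeff_eq_zero]
      intro m hm
      have hm' : n + 1 ≤ m := hm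
      rw [hf']
      simp only [Polynomial.coeff_sub, Polynomial.coeff_smul, Polynomial.coeff_add,
        Polynomial.coeff_X_pow, Polynomial.coeff_X_add_one_pow, smul_eq_mul]
      rcases eq_or_lt_of_le hm' with h | h
      · rw [← h]
        simp [← hc]
        ring
      · have h1 : f.coeff m = 0 :=
          Polynomial.coeff_eq_zero_of_natDegree_lt (lt_of_le_of_lt hf h)
        have h2 : (n + 1).choose m = 0 := Nat.choose_eq_zero_of_lt h
        simp [h1, h2, if_neg (by omega : ¬ m = n + 1)]
    obtain ⟨g', hg'⟩ := ih f' hdeg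
    refine ⟨g' + c • Polynomial.X ^ (n + 1), ?_⟩
    rw [Polynomial.add_comp, Polynomial.smul_comp, Polynomial.X_pow_comp]
    have : g' + c • Polynomial.X ^ (n + 1) +
        (g'.comp (Polynomial.X + 1) + c • (Polynomial.X + 1) ^ (n + 1))
        = (g' + g'.comp (Polynomial.X + 1)) +
          c • (Polynomial.X ^ (n + 1) + (Polynomial.X + 1) ^ (n + 1)) := by
      rw [smul_add]; ring
    rw [this, hg', hf']
    have hC : Polynomial.C (c / 2) * 2 = Polynomial.C c := by
      rw [(map_ofNat (Polynomial.C (R := ℚ_[p])) 2).symm, ← Polynomial.C_mul,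
        div_mul_cancel₀ _ (two_ne_zero)]
    simp only [Polynomial.smul_eq_C_mul]
    linear_combination (-(Polynomial.X ^ (n + 1) + (Polynomial.X + 1) ^ (n + 1))) * hC

private lemma telescope_sum (p : ℕ) [Fact p.Prime] (g : Polynomial ℚ_[p]) (m : ℕ) :
    ∑ x ∈ Finset.range m, (-1 : ℚ_[p]) ^ x * (g.eval (x : ℚ_[p]) + g.eval ((x : ℚ_[p]) + 1))
      = g.eval 0 - (-1 : ℚ_[p]) ^ m * g.eval (m : ℚ_[p]) := by
  induction m with
  | zero => simp
  | succ m ih =>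
    rw [Finset.sum_range_succ, ih]
    push_cast
    ring

/-- For an odd prime `p` and a polynomial `f` over `ℚ_[p]`, the
sequence of alternating sums `N ↦ ∑_{x=0}^{p^N - 1} (-1)^x f(x)` converges in `ℚ_[p]`,
i.e. the fermionic `p`-adic integral of `f` on `ℤ_p` exists. -/
theorem fermionic_integral_exists (p : ℕ) [Fact p.Prime] (hp : Odd p)
    (f : Polynomial ℚ_[p]) :
    ∃ L : ℚ_[p],
      Tendsto (fun N : ℕ => ∑ x ∈ Finset.range (p ^ N), (-1 : ℚ_[p]) ^ x * f.eval (x : ℚ_[p]))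
        atTop (nhds L) := by
  obtain ⟨g, hg⟩ := exists_euler_poly p f.natDegree f le_rfl
  refine ⟨g.eval 0, ?_⟩
  have h1 : ∀ x : ℚ_[p], g.eval x + g.eval (x + 1) = 2 * f.eval x := by
    intro x
    have := congrArg (Polynomial.eval x) hg
    simpa [Polynomial.eval_comp] using this
  have key : ∀ N : ℕ, ∑ x ∈ Finset.range (p ^ N), (-1 : ℚ_[p]) ^ x * f.eval (x : ℚ_[p])
      = (g.eval 0 + g.eval ((p : ℚ_[p]) ^ N)) / 2 := by
    intro N
    have h2 : (2 : ℚ_[p]) * ∑ x ∈ Finset.range (p ^ N), (-1 : ℚ_[p]) ^ x * f.eval (x : ℚ_[p])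
        = g.eval 0 - (-1 : ℚ_[p]) ^ (p ^ N) * g.eval ((p ^ N : ℕ) : ℚ_[p]) := by
      rw [Finset.mul_sum, ← telescope_sum p g (p ^ N)]
      apply Finset.sum_congr rfl
      intro x _
      rw [h1]
      ring
    have hodd : Odd (p ^ N) := hp.pow
    rw [hodd.neg_one_pow] at h2
    have hcast : ((p ^ N : ℕ) : ℚ_[p]) = (p : ℚ_[p]) ^ N := by push_cast; ring
    rw [hcast] at h2
    rw [eq_div_iff (two_ne_zero)]
    linear_combination h2
  have hlim : Tendsto (fun N : ℕ => (p : ℚ_[p]) ^ N) atTop (nhds 0) :=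
    tendsto_pow_atTop_nhds_zero_of_norm_lt_one Padic.norm_p_lt_one
  have h3 : Tendsto (fun N : ℕ => g.eval ((p : ℚ_[p]) ^ N)) atTop (nhds (g.eval 0)) :=
    ((g.continuous).tendsto 0).comp hlim
  have h4 : Tendsto (fun N : ℕ => (g.eval 0 + g.eval ((p : ℚ_[p]) ^ N)) / 2) atTop
      (nhds ((g.eval 0 + g.eval 0) / 2)) :=
    (tendsto_const_nhds.add h3).div_const 2
  have : (g.eval 0 + g.eval 0) / 2 = g.eval 0 := by ring
  rw [this] at h4
  exact h4.congr fun N => (key N).symm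
end

section
/- Let p be an odd prime, let f be a polynomial with coefficients in ℚ_p, let n ≥ 1 be a natural number, and suppose the sequence N ↦ Σ_{x=0}^{p^N−1} (−1)^x f(x) converges in ℚ_p to L. Then the sequence N ↦ Σ_{x=0}^{p^N−1} (−1)^x f(x+n) converges in ℚ_p to 2 Σ_{l=0}^{n−1} (−1)^{n−1−l} f(l) − (−1)^{n−1} L; that is, ∫_{ℤ_p} f(x+n) dμ_{−1}(x) + (−1)^{n−1} ∫_{ℤ_p} f(x) dμ_{−1}(x) = 2 Σ_{l=0}^{n−1} (−1)^{n−1−l} f(l). -/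
open Filter Finset

lemma sum_shift {R : Type*} [CommRing R] (M : ℕ) (hM : Odd M) (g : ℕ → R) :
    ∑ x ∈ range M, (-1 : R) ^ x * g (x + 1)
      = g 0 + g M - ∑ x ∈ range M, (-1 : R) ^ x * g x := by
  have h := Finset.sum_range_succ' (fun x => (-1 : R) ^ x * g x) M
  rw [Finset.sum_range_succ] at h
  have hM1 : (-1 : R) ^ M = -1 := hM.neg_one_pow
  have e1 : ∑ x ∈ range M, (-1 : R) ^ (x + 1) * g (x + 1)
      = -∑ x ∈ range M, (-1 : R) ^ x * g (x + 1) := by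
    rw [← Finset.sum_neg_distrib]
    exact Finset.sum_congr rfl fun x _ => by rw [pow_succ]; ring
  rw [e1, hM1] at h
  simp only [pow_zero, one_mul] at h
  linear_combination h

lemma fermionic_aux (p : ℕ) [Fact p.Prime] (hp : Odd p)
    (f : Polynomial ℚ_[p]) (L : ℚ_[p])
    (hL : Tendsto (fun N : ℕ => ∑ x ∈ Finset.range (p ^ N),
        (-1 : ℚ_[p]) ^ x * f.eval (x : ℚ_[p])) atTop (nhds L)) (n : ℕ) :
    Tendsto (fun N : ℕ => ∑ x ∈ Finset.range (p ^ N),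
        (-1 : ℚ_[p]) ^ x * f.eval ((x : ℚ_[p]) + (n : ℚ_[p]))) atTop
      (nhds ((-1 : ℚ_[p]) ^ n *
        (L - 2 * ∑ l ∈ Finset.range n, (-1 : ℚ_[p]) ^ l * f.eval (l : ℚ_[p])))) := by
  induction n with
  | zero => simpa using hL
  | succ n ih =>
    have key : ∀ N : ℕ, ∑ x ∈ Finset.range (p ^ N),
        (-1 : ℚ_[p]) ^ x * f.eval ((x : ℚ_[p]) + ((n + 1 : ℕ) : ℚ_[p]))
      = f.eval (n : ℚ_[p]) + f.eval ((p : ℚ_[p]) ^ N + n)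
        - ∑ x ∈ Finset.range (p ^ N), (-1 : ℚ_[p]) ^ x * f.eval ((x : ℚ_[p]) + (n : ℚ_[p])) := by
      intro N
      have h0 := sum_shift (p ^ N) (hp.pow) (fun x : ℕ => f.eval ((x : ℚ_[p]) + (n : ℚ_[p])))
      have e1 : ∑ x ∈ Finset.range (p ^ N),
          (-1 : ℚ_[p]) ^ x * f.eval ((x : ℚ_[p]) + ((n + 1 : ℕ) : ℚ_[p]))
        = ∑ x ∈ Finset.range (p ^ N),
          (-1 : ℚ_[p]) ^ x * f.eval (((x + 1 : ℕ) : ℚ_[p]) + (n : ℚ_[p])) := by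
        refine Finset.sum_congr rfl fun x _ => ?_
        congr 1
        push_cast
        ring
      rw [e1, h0]
      congr 2
      · push_cast; ring
      · push_cast; ring
    simp only [key]
    have hpn : Tendsto (fun N : ℕ => (p : ℚ_[p]) ^ N) atTop (nhds 0) := by
      apply tendsto_pow_atTop_nhds_zero_of_norm_lt_one
      exact Padic.norm_p_lt_one
    have h2 : Tendsto (fun N : ℕ => f.eval ((p : ℚ_[p]) ^ N + n)) atTop
        (nhds (f.eval ((0 : ℚ_[p]) + n))) := by
      exact (f.continuous.tendsto _).comp (hpn.add_const _)
    have h3 := (((tendsto_const_nhds (x := f.eval ((n : ℕ) : ℚ_[p]))).add h2).sub ih)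
    convert h3 using 2
    rw [Finset.sum_range_succ, zero_add]
    have hsq : ((-1 : ℚ_[p]) ^ n) * ((-1) ^ n) = 1 := by
      rw [← pow_add]; exact Even.neg_one_pow ⟨n, rfl⟩
    linear_combination 2 * f.eval ((n : ℕ) : ℚ_[p]) * hsq


/-- If the fermionic `p`-adic integral of a polynomial `f` exists with
value `L`, then for `n ≥ 1`, `∫ f(x+n) dμ₋₁(x)` exists and equals
`2 ∑_{l=0}^{n-1} (-1)^{n-1-l} f(l) - (-1)^{n-1} L`. -/
theorem fermionic_integral_shift (p : ℕ) [Fact p.Prime] (hp : Odd p)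
    (f : Polynomial ℚ_[p]) (n : ℕ) (hn : 1 ≤ n) (L : ℚ_[p])
    (hL : Tendsto (fun N : ℕ => ∑ x ∈ Finset.range (p ^ N),
        (-1 : ℚ_[p]) ^ x * f.eval (x : ℚ_[p])) atTop (nhds L)) :
    Tendsto (fun N : ℕ => ∑ x ∈ Finset.range (p ^ N),
        (-1 : ℚ_[p]) ^ x * f.eval ((x : ℚ_[p]) + (n : ℚ_[p]))) atTop
      (nhds (2 * ∑ l ∈ Finset.range n, (-1 : ℚ_[p]) ^ (n - 1 - l) * f.eval (l : ℚ_[p])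
        - (-1 : ℚ_[p]) ^ (n - 1) * L)) := by
  have h := fermionic_aux p hp f L hL n
  convert h using 2
  have hpow : ∀ l ∈ Finset.range n, (-1 : ℚ_[p]) ^ (n - 1 - l) * f.eval (l : ℚ_[p])
      = ((-1 : ℚ_[p]) ^ (n - 1) * (-1) ^ l) * f.eval (l : ℚ_[p]) := by
    intro l hl
    rw [Finset.mem_range] at hl
    have h1 : (-1 : ℚ_[p]) ^ (n - 1 - l) * (-1) ^ l = (-1) ^ (n - 1) := by
      rw [← pow_add]; congr 1; omega
    have h2 : ((-1 : ℚ_[p]) ^ l) * ((-1) ^ l) = 1 := by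
      rw [← pow_add]; exact Even.neg_one_pow ⟨l, rfl⟩
    have := congrArg (· * (-1 : ℚ_[p]) ^ l) h1
    congr 1
    calc (-1 : ℚ_[p]) ^ (n - 1 - l) = (-1) ^ (n - 1 - l) * (((-1) ^ l) * ((-1) ^ l)) := by
          rw [h2, mul_one]
      _ = ((-1) ^ (n - 1 - l) * (-1) ^ l) * (-1) ^ l := by ring
      _ = (-1 : ℚ_[p]) ^ (n - 1) * (-1) ^ l := by rw [h1]
  rw [Finset.sum_congr rfl hpow]
  have hn1 : (-1 : ℚ_[p]) ^ (n - 1) * (-1) = (-1) ^ n := by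
    rw [← pow_succ]; congr 1; omega
  have hs : ∑ x ∈ Finset.range n, (-1 : ℚ_[p]) ^ (n - 1) * (-1) ^ x * f.eval (x : ℚ_[p])
      = (-1 : ℚ_[p]) ^ (n - 1) * ∑ x ∈ Finset.range n, (-1) ^ x * f.eval (x : ℚ_[p]) := by
    rw [Finset.mul_sum]
    exact Finset.sum_congr rfl fun _ _ => by ring
  rw [hs]
  linear_combination (L - 2 * (∑ l ∈ Finset.range n, (-1 : ℚ_[p]) ^ l * f.eval (l : ℚ_[p]))) * hn1
end

section
/- Let p be an odd prime and n a natural number. Then the sequence N ↦ Σ_{x=0}^{p^N−1} (−1)^x x^n converges in ℚ_p to the image of the Euler number E_n under the canonical map ℚ → ℚ_p; that is, ∫_{ℤ_p} x^n dμ_{−1}(x) = E_n. -/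
open Filter Finset

section Aux

variable {p : ℕ} [Fact p.Prime]

/-- Nonarchimedean bound for finite sums in `ℚ_[p]`. -/
lemma aux_norm_sum_le {ι : Type*} (s : Finset ι) (f : ι → ℚ_[p]) {C : ℝ} (hC : 0 ≤ C)
    (h : ∀ i ∈ s, ‖f i‖ ≤ C) : ‖∑ i ∈ s, f i‖ ≤ C := by
  classical
  induction s using Finset.induction_on with
  | empty => simpa using hC
  | @insert a s ha ih =>
    rw [Finset.sum_insert ha]
    refine le_trans (Padic.nonarchimedean _ _) (max_le ?_ ?_)
    · exact h a (Finset.mem_insert_self a s)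
    · exact ih fun i hi => h i (Finset.mem_insert_of_mem hi)

lemma aux_expand (M n : ℕ) :
    ∑ x ∈ Finset.range M, (-1 : ℚ_[p]) ^ x * ((x : ℚ_[p]) + 1) ^ n
      = ∑ k ∈ Finset.range (n + 1), (n.choose k : ℚ_[p]) *
          ∑ x ∈ Finset.range M, (-1 : ℚ_[p]) ^ x * (x : ℚ_[p]) ^ k := by
  simp_rw [add_pow, one_pow, mul_one, Finset.mul_sum]
  rw [Finset.sum_comm]
  exact Finset.sum_congr rfl fun k _ => Finset.sum_congr rfl fun x _ => by ring

lemma aux_shift (M n : ℕ) (hM : Odd M) :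
    ∑ x ∈ Finset.range M, (-1 : ℚ_[p]) ^ x * ((x : ℚ_[p]) + 1) ^ n
      + ∑ x ∈ Finset.range M, (-1 : ℚ_[p]) ^ x * (x : ℚ_[p]) ^ n
      = (0 : ℚ_[p]) ^ n + (M : ℚ_[p]) ^ n := by
  have h1 : ∑ y ∈ Finset.range (M + 1), (-1 : ℚ_[p]) ^ y * (y : ℚ_[p]) ^ n
      = (0 : ℚ_[p]) ^ n - ∑ x ∈ Finset.range M, (-1 : ℚ_[p]) ^ x * ((x : ℚ_[p]) + 1) ^ n := by
    rw [Finset.sum_range_succ']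
    have hterm : ∀ i : ℕ, (-1 : ℚ_[p]) ^ (i + 1) * ((i + 1 : ℕ) : ℚ_[p]) ^ n
        = -((-1 : ℚ_[p]) ^ i * ((i : ℚ_[p]) + 1) ^ n) := by
      intro i; push_cast; ring
    simp only [hterm, Finset.sum_neg_distrib]
    push_cast
    ring
  have h2 : ∑ y ∈ Finset.range (M + 1), (-1 : ℚ_[p]) ^ y * (y : ℚ_[p]) ^ n
      = (∑ x ∈ Finset.range M, (-1 : ℚ_[p]) ^ x * (x : ℚ_[p]) ^ n)
        + (-1 : ℚ_[p]) ^ M * (M : ℚ_[p]) ^ n := Finset.sum_range_succ _ M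
  have h3 : (-1 : ℚ_[p]) ^ M = -1 := hM.neg_one_pow
  rw [h3] at h2
  linear_combination h1 - h2

end Aux

/-- Let `E : ℕ → ℚ` be the Euler numbers, defined by `E 0 = 1` and, for
`n ≥ 1`, `∑_{k=0}^{n} (n choose k) E k + E n = 0`. For an odd prime `p` and `n : ℕ`, the
sequence `N ↦ ∑_{x=0}^{p^N - 1} (-1)^x x^n` converges in `ℚ_[p]` to `E n`, i.e.
`∫_{ℤ_p} x^n dμ₋₁(x) = E_n`. -/
theorem fermionic_integral_monomial_eq_eulerNumber (p : ℕ) [Fact p.Prime] (hp : Odd p)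
    (E : ℕ → ℚ) (hE0 : E 0 = 1)
    (hE : ∀ n : ℕ, 1 ≤ n → (∑ k ∈ Finset.range (n + 1), (n.choose k : ℚ) * E k) + E n = 0)
    (n : ℕ) :
    Tendsto (fun N : ℕ => ∑ x ∈ Finset.range (p ^ N), (-1 : ℚ_[p]) ^ x * (x : ℚ_[p]) ^ n)
      atTop (nhds ((E n : ℚ_[p]))) := by
  have hp1 : 1 < (p : ℝ) := by exact_mod_cast (Fact.out : p.Prime).one_lt
  have hpinv0 : (0 : ℝ) ≤ (p : ℝ)⁻¹ := by positivity
  have hpinv1 : (p : ℝ)⁻¹ < 1 := inv_lt_one_of_one_lt₀ hp1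
  set T : ℕ → ℕ → ℚ_[p] := fun N m => ∑ x ∈ Finset.range (p ^ N), (-1 : ℚ_[p]) ^ x * (x : ℚ_[p]) ^ m
    with hT
  -- norm of 2 is 1
  have h2norm : ‖(2 : ℚ_[p])‖ = 1 := by
    have hle : ‖((2 : ℤ) : ℚ_[p])‖ ≤ 1 := Padic.norm_int_le_one 2
    have hnlt : ¬ ‖((2 : ℤ) : ℚ_[p])‖ < 1 := by
      rw [Padic.norm_intCast_lt_one_iff]
      intro hdvd
      have hdvd' : p ∣ 2 := by exact_mod_cast hdvd
      have hle2 : p ≤ 2 := Nat.le_of_dvd (by norm_num) hdvd'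
      have hge2 : 2 ≤ p := (Fact.out : p.Prime).two_le
      have : p = 2 := le_antisymm hle2 hge2
      rw [this] at hp
      norm_num [Nat.odd_iff] at hp
    have := le_antisymm hle (not_lt.mp hnlt)
    simpa using this
  -- main bound by strong induction
  have key : ∀ m N : ℕ, ‖T N m - (E m : ℚ_[p])‖ ≤ ((p : ℝ)⁻¹) ^ N := by
    intro m
    induction m using Nat.strong_induction_on with
    | _ m ih =>
      intro N
      rcases Nat.eq_zero_or_pos m with hm | hm
      · subst hm
        have hodd : Odd (p ^ N) := hp.pow
        have : T N 0 = 1 := by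
          rw [hT]
          simp only [pow_zero, mul_one]
          rw [neg_one_geom_sum]
          simp [Nat.not_even_iff_odd.mpr hodd]
        rw [this, hE0]
        simp [pow_nonneg hpinv0]
      · -- m ≥ 1
        have hodd : Odd (p ^ N) := hp.pow
        -- identity: ∑_{k≤m} C(m,k) T N k + T N m = (p^N)^m
        have hid : ∑ k ∈ Finset.range (m + 1), (m.choose k : ℚ_[p]) * T N k + T N m
            = ((p : ℚ_[p]) ^ N) ^ m := by
          have h := aux_shift (p := p) (p ^ N) m hodd
          rw [aux_expand (p := p) (p ^ N) m] at h
          rw [zero_pow hm.ne'] at h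
          push_cast at h
          simp only [hT]
          linear_combination h
        -- Euler identity in ℚ_[p]
        have hEu : ∑ k ∈ Finset.range (m + 1), (m.choose k : ℚ_[p]) * (E k : ℚ_[p])
            + (E m : ℚ_[p]) = 0 := by
          have := hE m hm
          have := congrArg (fun q : ℚ => (q : ℚ_[p])) this
          push_cast at this
          simpa using this
        -- split off the last term
        rw [Finset.sum_range_succ, Nat.choose_self] at hid hEu
        have hsub : ∑ k ∈ Finset.range m, (m.choose k : ℚ_[p]) * T N k
            - ∑ k ∈ Finset.range m, (m.choose k : ℚ_[p]) * (E k : ℚ_[p])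
            = ∑ k ∈ Finset.range m, (m.choose k : ℚ_[p]) * (T N k - (E k : ℚ_[p])) := by
          rw [← Finset.sum_sub_distrib]
          exact Finset.sum_congr rfl fun k _ => (mul_sub _ _ _).symm
        have hkey : (2 : ℚ_[p]) * (T N m - (E m : ℚ_[p]))
            = ((p : ℚ_[p]) ^ N) ^ m
              - ∑ k ∈ Finset.range m, (m.choose k : ℚ_[p]) * (T N k - (E k : ℚ_[p])) := by
          linear_combination hid - hEu - hsub
        have hnorm : ‖T N m - (E m : ℚ_[p])‖
            = ‖((p : ℚ_[p]) ^ N) ^ m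
              - ∑ k ∈ Finset.range m, (m.choose k : ℚ_[p]) * (T N k - (E k : ℚ_[p]))‖ := by
          rw [← hkey, norm_mul, h2norm, one_mul]
        rw [hnorm]
        have hP : ‖((p : ℚ_[p]) ^ N) ^ m‖ ≤ ((p : ℝ)⁻¹) ^ N := by
          rw [← pow_mul, norm_pow, Padic.norm_p]
          exact pow_le_pow_of_le_one hpinv0 hpinv1.le (Nat.le_mul_of_pos_right N hm)
        have hS : ‖∑ k ∈ Finset.range m, (m.choose k : ℚ_[p]) * (T N k - (E k : ℚ_[p]))‖
            ≤ ((p : ℝ)⁻¹) ^ N := by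
          refine aux_norm_sum_le _ _ (pow_nonneg hpinv0 N) fun k hk => ?_
          rw [norm_mul]
          have hc : ‖(m.choose k : ℚ_[p])‖ ≤ 1 := by
            have := Padic.norm_int_le_one (p := p) (m.choose k : ℤ)
            simpa using this
          calc ‖(m.choose k : ℚ_[p])‖ * ‖T N k - (E k : ℚ_[p])‖
              ≤ 1 * ((p : ℝ)⁻¹) ^ N :=
                mul_le_mul hc (ih k (Finset.mem_range.mp hk) N) (norm_nonneg _)
                  zero_le_one
            _ = ((p : ℝ)⁻¹) ^ N := one_mul _
        calc ‖_ - _‖ ≤ max ‖((p : ℚ_[p]) ^ N) ^ m‖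
              ‖∑ k ∈ Finset.range m, (m.choose k : ℚ_[p]) * (T N k - (E k : ℚ_[p]))‖ := by
              rw [sub_eq_add_neg]
              refine le_trans (Padic.nonarchimedean _ _) ?_
              simp
          _ ≤ ((p : ℝ)⁻¹) ^ N := max_le hP hS
  -- conclude
  rw [tendsto_iff_norm_sub_tendsto_zero]
  refine squeeze_zero (fun N => norm_nonneg _) (fun N => key n N) ?_
  exact tendsto_pow_atTop_nhds_zero_of_lt_one hpinv0 hpinv1
end

section
/- Let p be an odd prime, n a natural number, and x ∈ ℚ_p. Then the sequence N ↦ Σ_{y=0}^{p^N−1} (−1)^y (x+y)^n converges in ℚ_p to Σ_{k=0}^{n} (n choose k) E_k x^{n−k}, i.e., to the value E_n(x) of the n-th Euler polynomial at x; that is, ∫_{ℤ_p} (x+y)^n dμ_{−1}(y) = E_n(x). -/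
open Filter Finset

/-- Auxiliary binomial identity: `C(n,k) C(n-k,m) = C(n,m) C(n-m,k)` when `k + m ≤ n`. -/
lemma aux_choose_swap {n k m : ℕ} (h : k + m ≤ n) :
    n.choose k * (n - k).choose m = n.choose m * (n - m).choose k := by
  have h1 := Nat.choose_mul (n := n) (k := k + m) (s := k) (Nat.le_add_right _ _)
  have h2 := Nat.choose_mul (n := n) (k := k + m) (s := m) (Nat.le_add_left _ _)
  rw [Nat.add_sub_cancel_left] at h1
  rw [Nat.add_sub_cancel] at h2
  rw [← h1, ← h2, Nat.choose_symm_add]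

/-- The key "reflection" identity for the Euler polynomial:
`E_n(z+1) + E_n(z) = 2 z^n` (for `n ≥ 1` at `z` arbitrary; here stated over `ℚ_[p]`). -/
lemma aux_euler_reflect (p : ℕ) [Fact p.Prime] (E : ℕ → ℚ) (hE0 : E 0 = 1)
    (hE : ∀ n : ℕ, 1 ≤ n → (∑ k ∈ Finset.range (n + 1), (n.choose k : ℚ) * E k) + E n = 0)
    (n : ℕ) (z : ℚ_[p]) :
    (∑ k ∈ Finset.range (n + 1), (n.choose k : ℚ_[p]) * (E k : ℚ_[p]) * (z + 1) ^ (n - k))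
      + (∑ k ∈ Finset.range (n + 1), (n.choose k : ℚ_[p]) * (E k : ℚ_[p]) * z ^ (n - k))
      = 2 * z ^ n := by
  -- expand (z+1)^(n-k) over range (n+1), with vanishing extra terms
  have expand : ∀ k ∈ Finset.range (n + 1),
      (n.choose k : ℚ_[p]) * (E k : ℚ_[p]) * (z + 1) ^ (n - k)
        = ∑ m ∈ Finset.range (n + 1),
            (n.choose k : ℚ_[p]) * (E k : ℚ_[p]) * (((n - k).choose m : ℚ_[p]) * z ^ m) := by
    intro k hk
    simp only [Finset.mem_range] at hk
    have hsub : Finset.range (n - k + 1) ⊆ Finset.range (n + 1) :=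
      Finset.range_subset_range.2 (by omega)
    have hpow : (z + 1) ^ (n - k) = ∑ m ∈ Finset.range (n + 1),
        ((n - k).choose m : ℚ_[p]) * z ^ m := by
      rw [add_pow]
      simp only [one_pow]
      rw [Finset.sum_subset hsub]
      · apply Finset.sum_congr rfl
        intro m hm
        ring
      · intro m _ hm
        simp only [Finset.mem_range, not_lt] at hm
        rw [Nat.choose_eq_zero_of_lt (by omega)]
        simp
    rw [hpow, Finset.mul_sum]
  rw [Finset.sum_congr rfl expand, Finset.sum_comm]
  -- reindex the second sum by reflection
  have refl2 : (∑ k ∈ Finset.range (n + 1), (n.choose k : ℚ_[p]) * (E k : ℚ_[p]) * z ^ (n - k))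
      = ∑ m ∈ Finset.range (n + 1),
          (n.choose m : ℚ_[p]) * (E (n - m) : ℚ_[p]) * z ^ m := by
    rw [← Finset.sum_range_reflect]
    apply Finset.sum_congr rfl
    intro m hm
    simp only [Finset.mem_range] at hm
    have hm' : m ≤ n := by omega
    rw [Nat.add_sub_cancel, Nat.sub_sub_self hm', Nat.choose_symm hm']
  rw [refl2, ← Finset.sum_add_distrib]
  -- now the coefficient of z^m is C(n,m) * ((∑_{i ≤ n-m} C(n-m,i) E i) + E (n-m))
  have coeff : ∀ m ∈ Finset.range (n + 1),
      (∑ k ∈ Finset.range (n + 1),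
          (n.choose k : ℚ_[p]) * (E k : ℚ_[p]) * (((n - k).choose m : ℚ_[p]) * z ^ m))
        + (n.choose m : ℚ_[p]) * (E (n - m) : ℚ_[p]) * z ^ m
      = (n.choose m : ℚ_[p]) *
          ((((∑ i ∈ Finset.range (n - m + 1), ((n - m).choose i : ℚ) * E i) + E (n - m) : ℚ)
            : ℚ_[p])) * z ^ m := by
    intro m hm
    simp only [Finset.mem_range] at hm
    have hm' : m ≤ n := by omega
    have hsum : (∑ k ∈ Finset.range (n + 1),
        (n.choose k : ℚ_[p]) * (E k : ℚ_[p]) * (((n - k).choose m : ℚ_[p]) * z ^ m))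
        = ∑ k ∈ Finset.range (n - m + 1),
            (n.choose m : ℚ_[p]) * (((n - m).choose k : ℚ_[p]) * (E k : ℚ_[p])) * z ^ m := by
      have hsub : Finset.range (n - m + 1) ⊆ Finset.range (n + 1) :=
        Finset.range_subset_range.2 (by omega)
      rw [← Finset.sum_subset hsub]
      · apply Finset.sum_congr rfl
        intro k hk
        simp only [Finset.mem_range] at hk
        have hswap := aux_choose_swap (n := n) (k := k) (m := m) (by omega)
        have : (n.choose k : ℚ_[p]) * ((n - k).choose m : ℚ_[p])
            = (n.choose m : ℚ_[p]) * ((n - m).choose k : ℚ_[p]) := by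
          exact_mod_cast congrArg (Nat.cast : ℕ → ℚ_[p]) hswap
        calc (n.choose k : ℚ_[p]) * (E k : ℚ_[p]) * (((n - k).choose m : ℚ_[p]) * z ^ m)
            = (n.choose k : ℚ_[p]) * ((n - k).choose m : ℚ_[p]) * (E k : ℚ_[p]) * z ^ m := by ring
          _ = (n.choose m : ℚ_[p]) * ((n - m).choose k : ℚ_[p]) * (E k : ℚ_[p]) * z ^ m := by
              rw [this]
          _ = (n.choose m : ℚ_[p]) * (((n - m).choose k : ℚ_[p]) * (E k : ℚ_[p])) * z ^ m := by
              ring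
      · intro k hk hk'
        simp only [Finset.mem_range, not_lt] at hk hk'
        rw [Nat.choose_eq_zero_of_lt (show n - k < m by omega)]
        simp
    rw [hsum, ← Finset.sum_mul, ← Finset.mul_sum]
    push_cast
    ring
  rw [Finset.sum_congr rfl coeff]
  -- split off the last term m = n; all other terms vanish by the recurrence
  rw [Finset.sum_range_succ]
  have hrest : ∀ m ∈ Finset.range n,
      (n.choose m : ℚ_[p]) *
          ((((∑ i ∈ Finset.range (n - m + 1), ((n - m).choose i : ℚ) * E i) + E (n - m) : ℚ)
            : ℚ_[p])) * z ^ m = 0 := by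
    intro m hm
    simp only [Finset.mem_range] at hm
    rw [hE (n - m) (by omega)]
    simp
  rw [Finset.sum_eq_zero hrest]
  simp [Nat.sub_self, hE0]
  norm_num

/-- Telescoping: `2 ∑_{y<M} (-1)^y (x+y)^n = E_n(x) - (-1)^M E_n(x+M)`. -/
lemma aux_telescope (p : ℕ) [Fact p.Prime] (E : ℕ → ℚ) (hE0 : E 0 = 1)
    (hE : ∀ n : ℕ, 1 ≤ n → (∑ k ∈ Finset.range (n + 1), (n.choose k : ℚ) * E k) + E n = 0)
    (n : ℕ) (x : ℚ_[p]) (M : ℕ) :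
    2 * ∑ y ∈ Finset.range M, (-1 : ℚ_[p]) ^ y * (x + (y : ℚ_[p])) ^ n
      = (∑ k ∈ Finset.range (n + 1), (n.choose k : ℚ_[p]) * (E k : ℚ_[p]) * x ^ (n - k))
        - (-1 : ℚ_[p]) ^ M *
          (∑ k ∈ Finset.range (n + 1),
            (n.choose k : ℚ_[p]) * (E k : ℚ_[p]) * (x + (M : ℚ_[p])) ^ (n - k)) := by
  induction M with
  | zero => simp
  | succ M ih =>
      rw [Finset.sum_range_succ, mul_add, ih]
      have key := aux_euler_reflect p E hE0 hE n (x + (M : ℚ_[p]))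
      have hcast : (( (M : ℕ) + 1 : ℕ) : ℚ_[p]) = (M : ℚ_[p]) + 1 := by push_cast; ring
      rw [hcast]
      have : x + ((M : ℚ_[p]) + 1) = (x + (M : ℚ_[p])) + 1 := by ring
      rw [this]
      set A := ∑ k ∈ Finset.range (n + 1),
          (n.choose k : ℚ_[p]) * (E k : ℚ_[p]) * (x + (M : ℚ_[p])) ^ (n - k) with hA
      set B := ∑ k ∈ Finset.range (n + 1),
          (n.choose k : ℚ_[p]) * (E k : ℚ_[p]) * ((x + (M : ℚ_[p])) + 1) ^ (n - k) with hB
      have hBA : B + A = 2 * (x + (M : ℚ_[p])) ^ n := key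
      have h2 : 2 * ((-1 : ℚ_[p]) ^ M * (x + (M : ℚ_[p])) ^ n)
          = (-1 : ℚ_[p]) ^ M * (B + A) := by rw [hBA]; ring
      rw [h2, pow_succ]
      ring

/-- Let `E : ℕ → ℚ` be the Euler numbers, defined by `E 0 = 1` and, for
`n ≥ 1`, `∑_{k=0}^{n} (n choose k) E k + E n = 0`. For an odd prime `p`, `n : ℕ` and
`x ∈ ℚ_[p]`, the sequence `N ↦ ∑_{y=0}^{p^N - 1} (-1)^y (x+y)^n` converges in `ℚ_[p]` to
`E_n(x) = ∑_{k=0}^{n} (n choose k) E_k x^{n-k}`, i.e. `∫_{ℤ_p} (x+y)^n dμ₋₁(y) = E_n(x)`. -/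
theorem fermionic_integral_shifted_monomial_eq_eulerPolynomial (p : ℕ) [Fact p.Prime]
    (hp : Odd p) (E : ℕ → ℚ) (hE0 : E 0 = 1)
    (hE : ∀ n : ℕ, 1 ≤ n → (∑ k ∈ Finset.range (n + 1), (n.choose k : ℚ) * E k) + E n = 0)
    (n : ℕ) (x : ℚ_[p]) :
    Tendsto (fun N : ℕ => ∑ y ∈ Finset.range (p ^ N), (-1 : ℚ_[p]) ^ y * (x + (y : ℚ_[p])) ^ n)
      atTop
      (nhds (∑ k ∈ Finset.range (n + 1), (n.choose k : ℚ_[p]) * (E k : ℚ_[p]) * x ^ (n - k))) := by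
  set P : ℚ_[p] → ℚ_[p] := fun z =>
    ∑ k ∈ Finset.range (n + 1), (n.choose k : ℚ_[p]) * (E k : ℚ_[p]) * z ^ (n - k) with hP
  -- the sequence equals (P x + P (x + p^N)) / 2
  have hform : ∀ N : ℕ,
      (∑ y ∈ Finset.range (p ^ N), (-1 : ℚ_[p]) ^ y * (x + (y : ℚ_[p])) ^ n)
        = (P x + P (x + ((p : ℚ_[p])) ^ N)) / 2 := by
    intro N
    have htel := aux_telescope p E hE0 hE n x (p ^ N)
    have hodd : Odd (p ^ N) := hp.pow
    have hneg : (-1 : ℚ_[p]) ^ (p ^ N) = -1 := hodd.neg_one_pow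
    have hcast : ((p ^ N : ℕ) : ℚ_[p]) = (p : ℚ_[p]) ^ N := by push_cast; ring
    rw [hneg, hcast] at htel
    have h2 : (2 : ℚ_[p]) ≠ 0 := two_ne_zero
    rw [eq_div_iff h2]
    simp only [hP]
    linear_combination htel
  have hPc : Continuous P := by
    apply continuous_finset_sum
    intro k _
    exact (continuous_const.mul continuous_const).mul (continuous_pow (M := ℚ_[p]) _ |>.comp continuous_id)
  have hpow : Tendsto (fun N : ℕ => (p : ℚ_[p]) ^ N) atTop (nhds 0) :=
    tendsto_pow_atTop_nhds_zero_of_norm_lt_one Padic.norm_p_lt_one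
  have hPx : Tendsto (fun N : ℕ => P (x + (p : ℚ_[p]) ^ N)) atTop (nhds (P x)) := by
    have : Tendsto (fun N : ℕ => x + (p : ℚ_[p]) ^ N) atTop (nhds (x + 0)) :=
      tendsto_const_nhds.add hpow
    rw [add_zero] at this
    exact (hPc.continuousAt.tendsto).comp this
  have hmain : Tendsto (fun N : ℕ => (P x + P (x + (p : ℚ_[p]) ^ N)) / 2) atTop
      (nhds ((P x + P x) / 2)) := by
    exact (tendsto_const_nhds.add hPx).div_const 2
  have hfin : (P x + P x) / 2 = P x := by ring
  rw [hfin] at hmain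
  exact hmain.congr (fun N => (hform N).symm)
end

section
/- Let p be an odd prime, and for each natural number n let L_n ∈ ℚ_p be the limit of the sequence N ↦ Σ_{x=0}^{p^N−1} (−1)^x x^n (assumed to exist). Then L_0 = 1, and for every n ≥ 1 one has Σ_{k=0}^{n} (n choose k) L_k + L_n = 0; that is, the fermionic p-adic integrals of the monomials satisfy the Euler number recurrence (E+1)^n + E_n = 2δ_{0,n}. -/
open Filter Finset

/-- Key finite identity: for odd `M` and `n ≥ 1`,
`∑_k C(n,k) S_k + S_n = M^n` where `S_k = ∑_{x<M} (-1)^x x^k`. -/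
lemma fermionic_key (p : ℕ) [Fact p.Prime] (M n : ℕ) (hM : Odd M) (hn : 1 ≤ n) :
    (∑ k ∈ Finset.range (n + 1), (n.choose k : ℚ_[p]) *
        ∑ x ∈ Finset.range M, (-1 : ℚ_[p]) ^ x * (x : ℚ_[p]) ^ k) +
      ∑ x ∈ Finset.range M, (-1 : ℚ_[p]) ^ x * (x : ℚ_[p]) ^ n = (M : ℚ_[p]) ^ n := by
  have hswap : (∑ k ∈ Finset.range (n + 1), (n.choose k : ℚ_[p]) *
        ∑ x ∈ Finset.range M, (-1 : ℚ_[p]) ^ x * (x : ℚ_[p]) ^ k)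
      = ∑ x ∈ Finset.range M, (-1 : ℚ_[p]) ^ x * ((x : ℚ_[p]) + 1) ^ n := by
    simp_rw [Finset.mul_sum]
    rw [Finset.sum_comm]
    apply Finset.sum_congr rfl
    intro x _
    rw [add_pow, Finset.mul_sum]
    apply Finset.sum_congr rfl
    intro k _
    ring
  rw [hswap]
  set g : ℕ → ℚ_[p] := fun y => (-1 : ℚ_[p]) ^ y * (y : ℚ_[p]) ^ n with hg
  have h1 : ∑ x ∈ Finset.range M, (-1 : ℚ_[p]) ^ x * ((x : ℚ_[p]) + 1) ^ n
      = -∑ x ∈ Finset.range M, g (x + 1) := by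
    rw [← Finset.sum_neg_distrib]
    apply Finset.sum_congr rfl
    intro x _
    simp only [hg, pow_succ, Nat.cast_add, Nat.cast_one]
    ring
  have h2 : ∑ x ∈ Finset.range M, g (x + 1)
      = (∑ x ∈ Finset.range M, g x) + g M - g 0 := by
    have := Finset.sum_range_succ' g M
    have h3 := Finset.sum_range_succ g M
    rw [h3] at this
    linear_combination -this
  have hg0 : g 0 = 0 := by
    simp [hg, zero_pow (by omega : n ≠ 0)]
  have hgM : g M = -((M : ℚ_[p]) ^ n) := by
    simp [hg, hM.neg_one_pow]
  rw [h1, h2, hg0, hgM]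
  ring

/-- For an odd prime `p`, suppose that for each `n : ℕ` the sequence
`N ↦ ∑_{x=0}^{p^N - 1} (-1)^x x^n` converges in `ℚ_[p]` to `L n`. Then `L 0 = 1` and for
every `n ≥ 1` one has `∑_{k=0}^{n} (n choose k) L k + L n = 0`; i.e. the fermionic
`p`-adic integrals of the monomials satisfy the Euler number recurrence
`(E+1)^n + E_n = 2 δ_{0,n}`. -/
theorem fermionic_integrals_satisfy_euler_recurrence (p : ℕ) [Fact p.Prime] (hp : Odd p)
    (L : ℕ → ℚ_[p])
    (hL : ∀ n : ℕ, Tendsto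
      (fun N : ℕ => ∑ x ∈ Finset.range (p ^ N), (-1 : ℚ_[p]) ^ x * (x : ℚ_[p]) ^ n)
      atTop (nhds (L n))) :
    L 0 = 1 ∧ ∀ n : ℕ, 1 ≤ n →
      (∑ k ∈ Finset.range (n + 1), (n.choose k : ℚ_[p]) * L k) + L n = 0 := by
  have hodd : ∀ N : ℕ, Odd (p ^ N) := fun N => hp.pow
  constructor
  · have h0 : Tendsto (fun N : ℕ => ∑ x ∈ Finset.range (p ^ N),
        (-1 : ℚ_[p]) ^ x * (x : ℚ_[p]) ^ 0) atTop (nhds 1) := by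
      have heq : ∀ N : ℕ, ∑ x ∈ Finset.range (p ^ N),
          (-1 : ℚ_[p]) ^ x * (x : ℚ_[p]) ^ 0 = 1 := by
        intro N
        simp only [pow_zero, mul_one]
        rw [neg_one_geom_sum, if_neg (Nat.not_even_iff_odd.mpr (hodd N))]
      simp only [heq]
      exact tendsto_const_nhds
    exact tendsto_nhds_unique (hL 0) h0
  · intro n hn
    -- LHS tends to the desired sum
    have hlhs : Tendsto (fun N : ℕ =>
        (∑ k ∈ Finset.range (n + 1), (n.choose k : ℚ_[p]) *
          ∑ x ∈ Finset.range (p ^ N), (-1 : ℚ_[p]) ^ x * (x : ℚ_[p]) ^ k) +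
        ∑ x ∈ Finset.range (p ^ N), (-1 : ℚ_[p]) ^ x * (x : ℚ_[p]) ^ n)
        atTop (nhds ((∑ k ∈ Finset.range (n + 1), (n.choose k : ℚ_[p]) * L k) + L n)) := by
      apply Tendsto.add _ (hL n)
      apply tendsto_finset_sum
      intro k _
      exact (hL k).const_mul _
    -- RHS tends to 0
    have hrhs : Tendsto (fun N : ℕ => ((p ^ N : ℕ) : ℚ_[p]) ^ n) atTop (nhds 0) := by
      have hp1 : ‖(p : ℚ_[p])‖ < 1 := Padic.norm_p_lt_one
      have h1 : Tendsto (fun N : ℕ => (p : ℚ_[p]) ^ N) atTop (nhds 0) :=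
        tendsto_pow_atTop_nhds_zero_of_norm_lt_one hp1
      have h2 : Tendsto (fun N : ℕ => ((p : ℚ_[p]) ^ N) ^ n) atTop (nhds ((0 : ℚ_[p]) ^ n)) :=
        (continuous_pow n).continuousAt.tendsto.comp h1
      rw [zero_pow (by omega : n ≠ 0)] at h2
      simpa using h2
    have heq : (fun N : ℕ =>
        (∑ k ∈ Finset.range (n + 1), (n.choose k : ℚ_[p]) *
          ∑ x ∈ Finset.range (p ^ N), (-1 : ℚ_[p]) ^ x * (x : ℚ_[p]) ^ k) +
        ∑ x ∈ Finset.range (p ^ N), (-1 : ℚ_[p]) ^ x * (x : ℚ_[p]) ^ n)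
        = fun N : ℕ => ((p ^ N : ℕ) : ℚ_[p]) ^ n := by
      funext N
      exact fermionic_key p (p ^ N) n (hodd N) hn
    rw [heq] at hlhs
    exact tendsto_nhds_unique hlhs hrhs
end

section
/- Let p be an odd prime, n and r ≥ 1 natural numbers, and suppose f_0, f_1, …, f_r : ℚ_p → ℚ_p are functions such that f_0(x) = x^n for all x, and for each j < r and each x ∈ ℚ_p the sequence N ↦ Σ_{u=0}^{p^N−1} (−1)^u f_j(x+u) converges in ℚ_p to f_{j+1}(x). Then f_r(0) = Σ (n!/(i_1!⋯i_r!)) E_{i_1}⋯E_{i_r}, the sum over all r-tuples (i_1,…,i_r) of natural numbers with i_1+⋯+i_r = n, and the Euler numbers E_k viewed in ℚ_p via the canonical map; that is, the r-fold iterated fermionic p-adic integral ∫_{ℤ_p}⋯∫_{ℤ_p} (x_1+⋯+x_r)^n dμ_{−1}(x_1)⋯dμ_{−1}(x_r) equals the n-th Euler number of order r, E_n^{(r)} = Σ_{i_1+⋯+i_r=n} (n choose i_1,…,i_r) E_{i_1}⋯E_{i_r}. -/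
open Filter Finset


lemma sum_range_mul_aux {M : Type*} [AddCommMonoid M] (g : ℕ → M) (a b : ℕ) :
    ∑ u ∈ Finset.range (a * b), g u =
      ∑ c ∈ Finset.range a, ∑ v ∈ Finset.range b, g (c * b + v) := by
  induction a with
  | zero => simp
  | succ a ih =>
      rw [Nat.succ_mul, Finset.sum_range_add, ih, Finset.sum_range_succ]

lemma choose_swap {n x y : ℕ} (h : x + y ≤ n) :
    n.choose x * (n - x).choose y = n.choose y * (n - y).choose x := by
  have h1 := Nat.choose_mul (n := n) (Nat.le_add_right x y)
  have h2 := Nat.choose_mul (n := n) (Nat.le_add_left y x)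
  rw [Nat.add_sub_cancel_left] at h1
  rw [Nat.add_sub_cancel] at h2
  have hsymm : (x + y).choose x = (x + y).choose y := by
    rw [← Nat.choose_symm (Nat.le_add_right x y), Nat.add_sub_cancel_left]
  rw [← h1, ← h2, hsymm]

lemma multinomial_univ_cons {k : ℕ} (a : ℕ) (t : Fin k → ℕ) :
    Nat.multinomial Finset.univ (Fin.cons a t) =
      (a + ∑ i, t i).choose a * Nat.multinomial Finset.univ t := by
  have h0 : (0 : Fin (k+1)) ∉ (univ : Finset (Fin k)).map (Fin.succEmb k) := by
    simp [Fin.succ_ne_zero, Fin.succEmb]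
  rw [Fin.univ_succ, Nat.multinomial_cons, Fin.cons_zero, Finset.sum_map]
  unfold Nat.multinomial
  rw [Finset.sum_map, Finset.prod_map]
  simp [Fin.cons_succ]

lemma sum_antidiagonalTuple_succ {M : Type*} [AddCommMonoid M] (k n : ℕ)
    (g : (Fin (k+1) → ℕ) → M) :
    ∑ x ∈ Finset.Nat.antidiagonalTuple (k+1) n, g x
      = ∑ ab ∈ Finset.HasAntidiagonal.antidiagonal n, ∑ t ∈ Finset.Nat.antidiagonalTuple k ab.2,
          g (Fin.cons ab.1 t) := by
  rw [Finset.sum_sigma']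
  refine Finset.sum_nbij' (i := fun x => ⟨(x 0, ∑ i, Fin.tail x i), Fin.tail x⟩)
    (j := fun y => Fin.cons y.1.1 y.2) ?_ ?_ ?_ ?_ ?_
  · intro x hx
    rw [Finset.Nat.mem_antidiagonalTuple] at hx
    refine Finset.mem_sigma.mpr ⟨?_, ?_⟩
    · rw [Finset.HasAntidiagonal.mem_antidiagonal]
      rw [← hx, Fin.sum_univ_succ]; rfl
    · exact Finset.Nat.mem_antidiagonalTuple.mpr rfl
  · intro y hy
    rw [Finset.mem_sigma] at hy
    obtain ⟨h1, h2⟩ := hy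
    rw [Finset.HasAntidiagonal.mem_antidiagonal] at h1
    rw [Finset.Nat.mem_antidiagonalTuple] at h2 ⊢
    rw [Fin.sum_univ_succ]
    simp [Fin.cons_succ, h2, h1]
  · intro x hx
    exact Fin.cons_self_tail x
  · intro y hy
    rw [Finset.mem_sigma] at hy
    obtain ⟨h1, h2⟩ := hy
    rw [Finset.Nat.mem_antidiagonalTuple] at h2
    refine Sigma.ext ?_ ?_
    · simp [Fin.tail_cons, h2]
    · simp [Fin.tail_cons]
  · intro x hx
    rw [Fin.cons_self_tail]

def eAux (E : ℕ → ℚ) : ℕ → ℕ → ℚ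
  | 0 => fun m => if m = 0 then 1 else 0
  | (j+1) => fun t => ∑ ab ∈ Finset.HasAntidiagonal.antidiagonal t,
      (t.choose ab.1 : ℚ) * E ab.1 * eAux E j ab.2

lemma eAux_eq (E : ℕ → ℚ) : ∀ j m, eAux E j m =
    ∑ i ∈ Finset.Nat.antidiagonalTuple j m,
      (Nat.multinomial Finset.univ i : ℚ) * ∏ k : Fin j, E (i k)
  | 0, 0 => by simp [eAux]
  | 0, (m+1) => by simp [eAux]
  | (j+1), t => by
      rw [eAux, sum_antidiagonalTuple_succ]
      refine Finset.sum_congr rfl fun ab hab => ?_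
      rw [Finset.HasAntidiagonal.mem_antidiagonal] at hab
      rw [eAux_eq E j ab.2, Finset.mul_sum]
      refine Finset.sum_congr rfl fun i hi => ?_
      rw [Finset.Nat.mem_antidiagonalTuple] at hi
      rw [multinomial_univ_cons, hi, hab, Fin.prod_univ_succ]
      simp only [Fin.cons_zero, Fin.cons_succ]
      push_cast
      ring


lemma dvd_step (p : ℕ) (hp : Odd p) (hp1 : 0 < p) (m N : ℕ) :
    ((p:ℤ)^N) ∣ ((∑ u ∈ Finset.range (p^(N+1)), (-1:ℤ)^u * (u:ℤ)^m) -
                 (∑ u ∈ Finset.range (p^N), (-1:ℤ)^u * (u:ℤ)^m)) := by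
  have hne : NeZero (p^N) := ⟨pow_ne_zero _ hp1.ne'⟩
  have key : (((∑ u ∈ Finset.range (p^(N+1)), (-1:ℤ)^u * (u:ℤ)^m) -
      (∑ u ∈ Finset.range (p^N), (-1:ℤ)^u * (u:ℤ)^m) : ℤ) : ZMod (p^N)) = 0 := by
    push_cast
    rw [sub_eq_zero]
    have hsplit : p^(N+1) = p * p^N := by ring
    rw [hsplit, sum_range_mul_aux (fun u => (-1 : ZMod (p^N))^u * (u:ZMod (p^N))^m) p (p^N)]
    have hterm : ∀ c v : ℕ, (-1 : ZMod (p^N))^(c * p^N + v) * ((c * p^N + v : ℕ) : ZMod (p^N))^m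
        = (-1)^c * ((-1)^v * (v : ZMod (p^N))^m) := by
      intro c v
      have h1 : ((c * p^N + v : ℕ) : ZMod (p^N)) = (v : ZMod (p^N)) := by
        have hz : ((p : ZMod (p^N)))^N = 0 := by rw [← Nat.cast_pow, ZMod.natCast_self]
        push_cast
        rw [hz]
        ring
      have h2 : (-1 : ZMod (p^N))^(c * p^N + v) = (-1)^c * (-1)^v := by
        rw [pow_add, mul_comm c (p^N), pow_mul, (hp.pow).neg_one_pow]
      rw [h1, h2, mul_assoc]
    calc ∑ c ∈ Finset.range p, ∑ v ∈ Finset.range (p^N),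
            (-1 : ZMod (p^N))^(c * p^N + v) * ((c * p^N + v : ℕ) : ZMod (p^N))^m
        = ∑ c ∈ Finset.range p, (-1:ZMod (p^N))^c *
            ∑ v ∈ Finset.range (p^N), (-1:ZMod (p^N))^v * (v : ZMod (p^N))^m := by
          refine Finset.sum_congr rfl fun c _ => ?_
          rw [Finset.mul_sum]
          exact Finset.sum_congr rfl fun v _ => hterm c v
      _ = (∑ c ∈ Finset.range p, (-1:ZMod (p^N))^c) *
            ∑ v ∈ Finset.range (p^N), (-1:ZMod (p^N))^v * (v : ZMod (p^N))^m := by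
          rw [Finset.sum_mul]
      _ = ∑ v ∈ Finset.range (p^N), (-1:ZMod (p^N))^v * (v : ZMod (p^N))^m := by
          rw [neg_one_geom_sum, if_neg (Nat.not_even_iff_odd.mpr hp), one_mul]
      _ = ∑ u ∈ Finset.range (p^N), (-1:ZMod (p^N))^u * ((u:ℕ) : ZMod (p^N))^m := rfl
  have := (ZMod.intCast_zmod_eq_zero_iff_dvd _ (p^N)).mp key
  rwa [Nat.cast_pow] at this

lemma T_exists (p : ℕ) [Fact p.Prime] (hp : Odd p) (m : ℕ) :
    ∃ L : ℚ_[p], Tendsto (fun N : ℕ => ∑ u ∈ Finset.range (p^N),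
      (-1:ℚ_[p])^u * (u:ℚ_[p])^m) atTop (nhds L) := by
  set T : ℕ → ℚ_[p] := fun N => ∑ u ∈ Finset.range (p^N), (-1:ℚ_[p])^u * (u:ℚ_[p])^m with hT
  have hprime : p.Prime := Fact.out
  have hp1 : 0 < p := hprime.pos
  have hTA : ∀ N, T N = (((∑ u ∈ Finset.range (p^N), (-1:ℤ)^u * (u:ℤ)^m : ℤ)) : ℚ_[p]) := by
    intro N; rw [hT]; push_cast; ring
  have hcau : CauchySeq T := by
    apply cauchySeq_of_le_geometric ((p:ℝ)⁻¹) 1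
    · rw [inv_lt_one_iff₀]
      right
      exact_mod_cast hprime.one_lt
    · intro N
      obtain ⟨z, hz⟩ := dvd_step p hp hp1 m N
      rw [dist_eq_norm, hTA, hTA]
      have : ((∑ u ∈ Finset.range (p^N), (-1:ℤ)^u * (u:ℤ)^m : ℤ) : ℚ_[p]) -
          ((∑ u ∈ Finset.range (p^(N+1)), (-1:ℤ)^u * (u:ℤ)^m : ℤ) : ℚ_[p])
          = -((p:ℚ_[p])^N * (z : ℚ_[p])) := by
        rw [← sub_eq_zero]
        have := sub_eq_iff_eq_add.mp hz
        push_cast [this]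
        ring
      rw [this, norm_neg, norm_mul, norm_pow, Padic.norm_p, one_mul]
      calc (p:ℝ)⁻¹ ^ N * ‖(z:ℚ_[p])‖ ≤ (p:ℝ)⁻¹^N * 1 := by
            refine mul_le_mul_of_nonneg_left (Padic.norm_int_le_one z) ?_
            positivity
        _ = (p:ℝ)⁻¹^N := mul_one _
  exact cauchySeq_tendsto_of_complete hcau

lemma T_identity (p : ℕ) [Fact p.Prime] (hp : Odd p) (m N : ℕ) (hm : 1 ≤ m) :
    ∑ k ∈ Finset.range (m+1), (m.choose k : ℚ_[p]) *
        (∑ u ∈ Finset.range (p^N), (-1:ℚ_[p])^u * (u:ℚ_[p])^k)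
      + (∑ u ∈ Finset.range (p^N), (-1:ℚ_[p])^u * (u:ℚ_[p])^m)
      = ((p:ℚ_[p])^m)^N := by
  have hM : Odd (p^N) := hp.pow
  set M := p^N with hMdef
  set F : ℕ → ℚ_[p] := fun v => (-1:ℚ_[p])^v * (v:ℚ_[p])^m with hF
  have key : ∑ u ∈ Finset.range M, (-1:ℚ_[p])^u * ((u:ℚ_[p])+1)^m
      = ∑ k ∈ Finset.range (m+1), (m.choose k : ℚ_[p]) *
          (∑ u ∈ Finset.range M, (-1:ℚ_[p])^u * (u:ℚ_[p])^k) := by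
    have expand : ∀ u : ℕ, (-1:ℚ_[p])^u * ((u:ℚ_[p])+1)^m
        = ∑ k ∈ Finset.range (m+1), (m.choose k : ℚ_[p]) * ((-1:ℚ_[p])^u * (u:ℚ_[p])^k) := by
      intro u
      rw [add_pow, Finset.mul_sum]
      exact Finset.sum_congr rfl fun k _ => by ring
    rw [Finset.sum_congr rfl fun u _ => expand u, Finset.sum_comm]
    exact Finset.sum_congr rfl fun k _ => by rw [Finset.mul_sum]
  have key2 : ∑ u ∈ Finset.range M, (-1:ℚ_[p])^u * ((u:ℚ_[p])+1)^m
      = (M:ℚ_[p])^m - ∑ u ∈ Finset.range M, (-1:ℚ_[p])^u * (u:ℚ_[p])^m := by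
    have hterm : ∀ u : ℕ, (-1:ℚ_[p])^u * ((u:ℚ_[p])+1)^m = -F (u+1) := by
      intro u
      rw [hF]
      push_cast
      rw [pow_succ]
      ring
    rw [Finset.sum_congr rfl fun u _ => hterm u]
    rw [Finset.sum_neg_distrib]
    have h1 : ∑ u ∈ Finset.range M, F (u+1) = (∑ v ∈ Finset.range (M+1), F v) - F 0 := by
      rw [Finset.sum_range_succ']
      ring
    have h2 : ∑ v ∈ Finset.range (M+1), F v
        = (∑ v ∈ Finset.range M, F v) + F M := Finset.sum_range_succ F M
    have hF0 : F 0 = 0 := by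
      rw [hF]
      simp [zero_pow (by omega : m ≠ 0)]
    have hFM : F M = -(M:ℚ_[p])^m := by
      rw [hF]
      simp only []
      rw [hM.neg_one_pow]
      ring
    rw [h1, h2, hF0, hFM]
    ring
  rw [← key, key2, hMdef]
  push_cast
  rw [← pow_mul, ← pow_mul, mul_comm N m]
  ring

lemma reindex_aux {R : Type*} [CommRing R] (n : ℕ) (x : R) (Ep ee : ℕ → R) :
    ∑ m ∈ Finset.range (n+1), ∑ i ∈ Finset.range (n-m+1),
        (n.choose m : R) * ((n-m).choose i : R) * ee m * Ep (n-m-i) * x^i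
      = ∑ t ∈ Finset.range (n+1), (n.choose t : R) *
          (∑ a ∈ Finset.range (t+1), (t.choose a : R) * Ep a * ee (t-a)) * x^(n-t) := by
  have hrhs : ∀ t, (n.choose t : R) *
          (∑ a ∈ Finset.range (t+1), (t.choose a : R) * Ep a * ee (t-a)) * x^(n-t)
      = ∑ a ∈ Finset.range (t+1),
          (n.choose t : R) * (t.choose a : R) * Ep a * ee (t-a) * x^(n-t) := by
    intro t
    rw [Finset.mul_sum, Finset.sum_mul]
    exact Finset.sum_congr rfl fun a _ => by ring
  rw [Finset.sum_congr rfl fun t _ => hrhs t]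
  rw [Finset.sum_sigma', Finset.sum_sigma']
  refine Finset.sum_nbij' (i := fun q => ⟨n - q.2, n - q.2 - q.1⟩)
    (j := fun q => ⟨q.1 - q.2, n - q.1⟩) ?_ ?_ ?_ ?_ ?_
  · intro q hq
    simp only [Finset.mem_sigma, Finset.mem_range] at hq ⊢
    omega
  · intro q hq
    simp only [Finset.mem_sigma, Finset.mem_range] at hq ⊢
    omega
  · intro q hq
    simp only [Finset.mem_sigma, Finset.mem_range] at hq
    refine Sigma.ext ?_ (heq_of_eq ?_) <;> simp <;> omega
  · intro q hq
    simp only [Finset.mem_sigma, Finset.mem_range] at hq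
    refine Sigma.ext ?_ (heq_of_eq ?_) <;> simp <;> omega
  · intro q hq
    simp only [Finset.mem_sigma, Finset.mem_range] at hq
    obtain ⟨hm, hi⟩ := hq
    dsimp only
    -- q = ⟨m, i⟩ with m ≤ n, i ≤ n - m
    have h1 : n - q.2 - (n - q.2 - q.1) = q.1 := by omega
    have h2 : n - q.2 - q.1 = n - q.1 - q.2 := by omega
    have h3 : n - (n - q.2) = q.2 := by omega
    have hcc : n.choose (n - q.2) * (n - q.2).choose (n - q.2 - q.1)
        = n.choose q.1 * (n - q.1).choose q.2 := by
      have e1 : n.choose (n - q.2) = n.choose q.2 := by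
        rw [Nat.choose_symm (by omega)]
      have e2 : (n - q.2).choose (n - q.2 - q.1) = (n - q.2).choose q.1 := by
        rw [Nat.choose_symm (by omega)]
      rw [e1, e2, choose_swap (by omega : q.2 + q.1 ≤ n)]
    rw [h1, h2, h3]
    calc (n.choose q.1 : R) * ((n-q.1).choose q.2 : R) * ee q.1 * Ep (n - q.1 - q.2) * x^q.2
        = ((n.choose q.1 * (n-q.1).choose q.2 : ℕ) : R) * ee q.1 * Ep (n - q.1 - q.2) * x^q.2 := by
          push_cast; ring
      _ = ((n.choose (n - q.2) * (n - q.2).choose (n - q.2 - q.1) : ℕ) : R) * ee q.1 * Ep (n - q.1 - q.2) * x^q.2 := by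
          rw [hcc]
      _ = (n.choose (n - q.2) : R) * ((n - q.2).choose (n - q.2 - q.1) : R) * Ep (n - q.1 - q.2) * ee q.1 * x^q.2 := by
          push_cast; ring
      _ = (n.choose (n - q.2) : R) * ((n - q.2).choose (n - q.1 - q.2) : R) * Ep (n - q.1 - q.2) * ee q.1 * x^q.2 := by
          rw [h2]

/-- Let `E : ℕ → ℚ` be the Euler numbers, defined by `E 0 = 1` and, for
`n ≥ 1`, `∑_{k=0}^{n} (n choose k) E k + E n = 0`. Let `p` be an odd prime, `n : ℕ`,
`r ≥ 1`, and suppose `f 0, f 1, …, f r : ℚ_[p] → ℚ_[p]` satisfy `f 0 x = x^n` and, for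
each `j < r` and each `x`, the sequence `N ↦ ∑_{u=0}^{p^N-1} (-1)^u (f j) (x+u)` converges
to `(f (j+1)) x`; i.e. `f r` is the `r`-fold iterated fermionic `p`-adic integral of `x^n`.
Then `f r 0 = ∑_{i₁+⋯+i_r = n} (n choose i₁,…,i_r) E_{i₁} ⋯ E_{i_r} = E_n^{(r)}`, the
`n`-th Euler number of order `r`. -/
theorem iterated_fermionic_integral_eq_higher_eulerNumber (p : ℕ) [Fact p.Prime] (hp : Odd p)
    (E : ℕ → ℚ) (hE0 : E 0 = 1)
    (hE : ∀ n : ℕ, 1 ≤ n → (∑ k ∈ Finset.range (n + 1), (n.choose k : ℚ) * E k) + E n = 0)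
    (n r : ℕ) (hr : 1 ≤ r) (f : ℕ → ℚ_[p] → ℚ_[p])
    (hf0 : ∀ x : ℚ_[p], f 0 x = x ^ n)
    (hf : ∀ j < r, ∀ x : ℚ_[p],
      Tendsto (fun N : ℕ => ∑ u ∈ Finset.range (p ^ N), (-1 : ℚ_[p]) ^ u * f j (x + (u : ℚ_[p])))
        atTop (nhds (f (j + 1) x))) :
    f r 0 = ∑ i ∈ Finset.Nat.antidiagonalTuple r n,
      (Nat.multinomial Finset.univ i : ℚ_[p]) * ∏ j : Fin r, ((E (i j) : ℚ) : ℚ_[p]) := by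
  have hprime : p.Prime := Fact.out
  choose L hL using fun m => T_exists p hp m
  -- L 0 = 1
  have hL0 : L 0 = 1 := by
    refine tendsto_nhds_unique (hL 0) ?_
    have h1 : ∀ N : ℕ, ∑ u ∈ Finset.range (p^N), (-1:ℚ_[p])^u * (u:ℚ_[p])^0 = 1 := by
      intro N
      simp only [pow_zero, mul_one]
      rw [neg_one_geom_sum, if_neg (Nat.not_even_iff_odd.mpr hp.pow)]
    exact Tendsto.congr (fun N => (h1 N).symm) tendsto_const_nhds
  -- recurrence for L
  have hLrec : ∀ m, 1 ≤ m →
      ∑ k ∈ Finset.range (m+1), (m.choose k : ℚ_[p]) * L k + L m = 0 := by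
    intro m hm
    have h1 : Tendsto (fun N : ℕ => ∑ k ∈ Finset.range (m+1), (m.choose k:ℚ_[p]) *
          (∑ u ∈ Finset.range (p^N), (-1:ℚ_[p])^u * (u:ℚ_[p])^k)
        + ∑ u ∈ Finset.range (p^N), (-1:ℚ_[p])^u * (u:ℚ_[p])^m) atTop
        (nhds (∑ k ∈ Finset.range (m+1), (m.choose k:ℚ_[p]) * L k + L m)) :=
      Tendsto.add (tendsto_finset_sum _ fun k _ => (hL k).const_mul _) (hL m)
    have h3 : Tendsto (fun N : ℕ => ((p:ℚ_[p])^m)^N) atTop (nhds 0) := by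
      apply tendsto_pow_atTop_nhds_zero_of_norm_lt_one
      rw [norm_pow, Padic.norm_p]
      have hplt : (1:ℝ) < p := by exact_mod_cast hprime.one_lt
      have hinv : (p:ℝ)⁻¹ < 1 := by rw [inv_lt_one_iff₀]; right; exact hplt
      calc (p:ℝ)⁻¹^m ≤ (p:ℝ)⁻¹^1 := pow_le_pow_of_le_one (by positivity) hinv.le hm
        _ < 1 := by simpa using hinv
    refine tendsto_nhds_unique h1 ?_
    exact Tendsto.congr (fun N => (T_identity p hp m N hm).symm) h3
  -- L equals Euler numbers
  have hLE : ∀ m, L m = ((E m : ℚ) : ℚ_[p]) := by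
    intro m
    induction m using Nat.strong_induction_on with
    | _ m ih =>
      rcases Nat.eq_zero_or_pos m with hm0 | hm
      · rw [hm0, hL0, hE0]; norm_num
      · have hrecL := hLrec m hm
        rw [Finset.sum_range_succ] at hrecL
        have hsum : ∑ k ∈ Finset.range m, (m.choose k:ℚ_[p]) * L k
            = ∑ k ∈ Finset.range m, (m.choose k:ℚ_[p]) * ((E k:ℚ):ℚ_[p]) :=
          Finset.sum_congr rfl fun k hk => by rw [ih k (Finset.mem_range.mp hk)]
        rw [hsum] at hrecL
        have hEm := hE m hm
        rw [Finset.sum_range_succ] at hEm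
        have hcast := congrArg (fun q : ℚ => (q:ℚ_[p])) hEm
        push_cast at hcast
        simp only [Nat.choose_self, Nat.cast_one, one_mul] at hrecL hcast
        have h2 : (2:ℚ_[p]) * L m = (2:ℚ_[p]) * ((E m:ℚ):ℚ_[p]) := by
          linear_combination hrecL - hcast
        exact mul_left_cancel₀ two_ne_zero h2
  -- shifted limits
  have hshift : ∀ (x : ℚ_[p]) (k : ℕ), Tendsto (fun N : ℕ => ∑ u ∈ Finset.range (p^N),
        (-1:ℚ_[p])^u * (x+(u:ℚ_[p]))^k) atTop
      (nhds (∑ i ∈ Finset.range (k+1), x^i * (k.choose i : ℚ_[p]) * L (k-i))) := by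
    intro x k
    have hre : ∀ N : ℕ, ∑ u ∈ Finset.range (p^N), (-1:ℚ_[p])^u * (x+(u:ℚ_[p]))^k
        = ∑ i ∈ Finset.range (k+1), x^i * (k.choose i:ℚ_[p]) *
            (∑ u ∈ Finset.range (p^N), (-1:ℚ_[p])^u * (u:ℚ_[p])^(k-i)) := by
      intro N
      have expand : ∀ u : ℕ, (-1:ℚ_[p])^u * (x+(u:ℚ_[p]))^k
          = ∑ i ∈ Finset.range (k+1), x^i * (k.choose i:ℚ_[p]) *
              ((-1:ℚ_[p])^u * (u:ℚ_[p])^(k-i)) := by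
        intro u
        rw [add_pow, Finset.mul_sum]
        exact Finset.sum_congr rfl fun i _ => by ring
      rw [Finset.sum_congr rfl fun u _ => expand u, Finset.sum_comm]
      exact Finset.sum_congr rfl fun i _ => by rw [Finset.mul_sum]
    exact Tendsto.congr (fun N => (hre N).symm)
      (tendsto_finset_sum _ fun i _ => ((hL (k-i)).const_mul _))
  -- main induction
  have hMain : ∀ j, j ≤ r → ∀ x : ℚ_[p], f j x
      = ∑ m ∈ Finset.range (n+1), (n.choose m:ℚ_[p]) * ((eAux E j m : ℚ):ℚ_[p]) * x^(n-m) := by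
    intro j
    induction j with
    | zero =>
      intro _ x
      rw [hf0]
      rw [Finset.sum_eq_single 0]
      · simp [eAux]
      · intro m _ hm0
        simp [eAux, hm0]
      · intro habs
        exact absurd (Finset.mem_range.mpr n.succ_pos) habs
    | succ j ihj =>
      intro hjr x
      have hj : j < r := lt_of_lt_of_le (Nat.lt_succ_self j) hjr
      have hre : ∀ N : ℕ, ∑ u ∈ Finset.range (p^N), (-1:ℚ_[p])^u * f j (x+(u:ℚ_[p]))
          = ∑ m ∈ Finset.range (n+1), (n.choose m:ℚ_[p]) * ((eAux E j m:ℚ):ℚ_[p]) *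
              (∑ u ∈ Finset.range (p^N), (-1:ℚ_[p])^u * (x+(u:ℚ_[p]))^(n-m)) := by
        intro N
        have hterm : ∀ u : ℕ, (-1:ℚ_[p])^u * f j (x+(u:ℚ_[p]))
            = ∑ m ∈ Finset.range (n+1), (n.choose m:ℚ_[p]) * ((eAux E j m:ℚ):ℚ_[p]) *
                ((-1:ℚ_[p])^u * (x+(u:ℚ_[p]))^(n-m)) := by
          intro u
          rw [ihj (le_of_lt hj) (x+(u:ℚ_[p])), Finset.mul_sum]
          exact Finset.sum_congr rfl fun m _ => by ring
        rw [Finset.sum_congr rfl fun u _ => hterm u, Finset.sum_comm]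
        exact Finset.sum_congr rfl fun m _ => by rw [Finset.mul_sum]
      have hlim2 : Tendsto (fun N : ℕ => ∑ u ∈ Finset.range (p^N),
            (-1:ℚ_[p])^u * f j (x+(u:ℚ_[p]))) atTop
          (nhds (∑ m ∈ Finset.range (n+1), (n.choose m:ℚ_[p]) * ((eAux E j m:ℚ):ℚ_[p]) *
            (∑ i ∈ Finset.range (n-m+1), x^i * ((n-m).choose i:ℚ_[p]) * L (n-m-i)))) :=
        Tendsto.congr (fun N => (hre N).symm)
          (tendsto_finset_sum _ fun m _ => ((hshift x (n-m)).const_mul _))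
      have heq := tendsto_nhds_unique (hf j hj x) hlim2
      rw [heq]
      -- algebra
      calc ∑ m ∈ Finset.range (n+1), (n.choose m:ℚ_[p]) * ((eAux E j m:ℚ):ℚ_[p]) *
            (∑ i ∈ Finset.range (n-m+1), x^i * ((n-m).choose i:ℚ_[p]) * L (n-m-i))
          = ∑ m ∈ Finset.range (n+1), ∑ i ∈ Finset.range (n-m+1),
              (n.choose m : ℚ_[p]) * ((n-m).choose i : ℚ_[p]) * ((eAux E j m:ℚ):ℚ_[p]) *
                ((E (n-m-i):ℚ):ℚ_[p]) * x^i := by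
            refine Finset.sum_congr rfl fun m _ => ?_
            rw [Finset.mul_sum]
            refine Finset.sum_congr rfl fun i _ => ?_
            rw [hLE (n-m-i)]
            ring
        _ = ∑ t ∈ Finset.range (n+1), (n.choose t : ℚ_[p]) *
              (∑ a ∈ Finset.range (t+1), (t.choose a : ℚ_[p]) * ((E a:ℚ):ℚ_[p]) *
                ((eAux E j (t-a):ℚ):ℚ_[p])) * x^(n-t) :=
            reindex_aux n x (fun a => ((E a:ℚ):ℚ_[p])) (fun m => ((eAux E j m:ℚ):ℚ_[p]))
        _ = ∑ t ∈ Finset.range (n+1), (n.choose t:ℚ_[p]) * ((eAux E (j+1) t:ℚ):ℚ_[p]) * x^(n-t) := by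
            refine Finset.sum_congr rfl fun t _ => ?_
            congr 1
            congr 1
            rw [show eAux E (j+1) t = ∑ ab ∈ Finset.HasAntidiagonal.antidiagonal t,
                (t.choose ab.1 : ℚ) * E ab.1 * eAux E j ab.2 from rfl]
            rw [Finset.Nat.sum_antidiagonal_eq_sum_range_succ_mk]
            push_cast
            rfl
  -- conclusion
  have hfin := hMain r le_rfl 0
  rw [hfin, Finset.sum_eq_single n]
  · rw [Nat.choose_self, Nat.sub_self, pow_zero, Nat.cast_one, one_mul, mul_one]
    rw [eAux_eq E r n]
    push_cast
    rfl
  · intro m hm hmn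
    have : n - m ≠ 0 := by
      rw [Finset.mem_range] at hm
      omega
    rw [zero_pow this, mul_zero]
  · intro habs
    exact absurd (Finset.mem_range.mpr n.lt_succ_self) habs
end

section
/- Let p be an odd prime, n a natural number, and x ∈ ℚ_p. Then the sum of the limits of the sequences N ↦ Σ_{y=0}^{p^N−1} (−1)^y (x+y+1)^n and N ↦ Σ_{y=0}^{p^N−1} (−1)^y (x+y)^n equals 2x^n; that is, ∫_{ℤ_p} (x+y+1)^n dμ_{−1}(y) + ∫_{ℤ_p} (x+y)^n dμ_{−1}(y) = 2x^n. -/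
open Filter Finset


private lemma sum_range_mul_decomp {M : Type*} [AddCommMonoid M] (f : ℕ → M) (m k : ℕ) :
    ∑ y ∈ range (m * k), f y = ∑ i ∈ range m, ∑ y ∈ range k, f (i * k + y) := by
  induction m with
  | zero => simp
  | succ m ih =>
      rw [sum_range_succ, ← ih, Nat.succ_mul, range_eq_Ico,
        ← Finset.sum_Ico_consecutive f (Nat.zero_le (m*k)) (Nat.le_add_right _ k)]
      congr 1
      · simp [← range_eq_Ico]
      rw [Finset.sum_Ico_eq_sum_range]
      simp [Nat.add_sub_cancel_left, ← range_eq_Ico]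

private lemma key_cauchy (p : ℕ) [Fact p.Prime] (hp : Odd p) (n : ℕ) (x : ℚ_[p]) :
    CauchySeq (fun N : ℕ => ∑ y ∈ Finset.range (p ^ N),
      (-1 : ℚ_[p]) ^ y * (x + (y : ℚ_[p])) ^ n) := by
  set C : ℝ := max ‖x‖ 1 with hC
  have hC1 : (1:ℝ) ≤ C := le_max_right _ _
  have hC0 : (0:ℝ) ≤ C := le_trans zero_le_one hC1
  have hxC : ‖x‖ ≤ C := le_max_left _ _
  have hp2 : (2:ℕ) ≤ p := (Fact.out : p.Prime).two_le
  have hr0 : (0:ℝ) ≤ ((p:ℝ))⁻¹ := by positivity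
  apply cauchySeq_of_le_geometric ((p:ℝ))⁻¹ (C ^ n)
  · rw [inv_lt_one_iff₀]
    right
    exact_mod_cast Nat.lt_of_lt_of_le one_lt_two hp2
  intro N
  rw [dist_eq_norm]
  set k := p ^ N with hk
  have hkodd : Odd k := hp.pow
  -- cast of a natural multiple of p^N has small norm
  have hsmall : ∀ i : ℕ, ‖((i * k : ℕ) : ℚ_[p])‖ ≤ ((p:ℝ))⁻¹ ^ N := by
    intro i
    push_cast
    rw [norm_mul]
    calc ‖(i:ℚ_[p])‖ * ‖(k:ℚ_[p])‖ ≤ 1 * ‖(k:ℚ_[p])‖ := by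
          apply mul_le_mul_of_nonneg_right _ (norm_nonneg _)
          have := Padic.norm_int_le_one (p := p) (i : ℤ)
          simpa using this
      _ = ‖(k:ℚ_[p])‖ := one_mul _
      _ ≤ ((p:ℝ))⁻¹ ^ N := by
          rw [hk]
          push_cast
          rw [norm_pow, Padic.norm_p, inv_pow]
  -- norm bound for the difference of shifted powers
  have hbound : ∀ (y : ℕ) (i : ℕ), y ∈ range k → i ∈ range p →
      ‖(x + (y:ℚ_[p])) ^ n - (x + (y:ℚ_[p]) + ((i * k : ℕ):ℚ_[p])) ^ n‖
        ≤ C ^ n * ((p:ℝ))⁻¹ ^ N := by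
    intro y i _ _
    set b : ℚ_[p] := x + (y:ℚ_[p]) with hb
    set c : ℚ_[p] := ((i * k : ℕ):ℚ_[p]) with hcc
    have hbnorm : ‖b‖ ≤ C := by
      refine (IsUltrametricDist.norm_add_le_max _ _).trans (max_le hxC ?_)
      have : ‖((y:ℤ) : ℚ_[p])‖ ≤ 1 := Padic.norm_int_le_one _
      simpa using this.trans hC1
    have hcnorm1 : ‖c‖ ≤ 1 := by
      have : ‖((↑(i*k):ℤ) : ℚ_[p])‖ ≤ 1 := Padic.norm_int_le_one _
      simpa [hcc] using this
    have hanorm : ‖b + c‖ ≤ C :=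
      (IsUltrametricDist.norm_add_le_max _ _).trans (max_le hbnorm (hcnorm1.trans hC1))
    have key : b ^ n - (b + c) ^ n
        = -((∑ j ∈ range n, (b + c) ^ j * b ^ (n - 1 - j)) * c) := by
      have := geom_sum₂_mul (b + c) b n
      rw [show b + c - b = c by ring] at this
      rw [this]; ring
    rw [key, norm_neg, norm_mul]
    have hgs : ‖∑ j ∈ range n, (b + c) ^ j * b ^ (n - 1 - j)‖ ≤ C ^ n := by
      apply IsUltrametricDist.norm_sum_le_of_forall_le_of_nonneg (by positivity)
      intro j hj
      have hj2 := Finset.mem_range.mp hj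
      rw [norm_mul, norm_pow, norm_pow]
      calc ‖b + c‖ ^ j * ‖b‖ ^ (n - 1 - j)
          ≤ C ^ j * C ^ (n - 1 - j) := by
            apply mul_le_mul (pow_le_pow_left₀ (norm_nonneg _) hanorm j)
              (pow_le_pow_left₀ (norm_nonneg _) hbnorm _) (by positivity) (by positivity)
        _ = C ^ (j + (n - 1 - j)) := (pow_add C j _).symm
        _ ≤ C ^ n := pow_le_pow_right₀ hC1 (by omega)
    exact mul_le_mul hgs (hsmall i) (norm_nonneg _) (by positivity)
  -- decompose the sum at level N+1
  have hdecomp : (∑ y ∈ range (p ^ (N+1)), (-1 : ℚ_[p]) ^ y * (x + (y : ℚ_[p])) ^ n)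
      = ∑ i ∈ range p, (-1:ℚ_[p]) ^ i *
          ∑ y ∈ range k, (-1:ℚ_[p]) ^ y * (x + (y:ℚ_[p]) + ((i * k : ℕ):ℚ_[p])) ^ n := by
    have : p ^ (N+1) = p * k := by rw [hk, pow_succ, mul_comm]
    rw [this, sum_range_mul_decomp (fun y => (-1 : ℚ_[p]) ^ y * (x + (y : ℚ_[p])) ^ n) p k]
    apply Finset.sum_congr rfl
    intro i _
    rw [Finset.mul_sum]
    apply Finset.sum_congr rfl
    intro y _
    have h1 : ((-1 : ℚ_[p])) ^ (i * k + y) = (-1)^i * (-1)^y := by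
      rw [pow_add, pow_mul', hkodd.neg_one_pow]
    have h2 : ((↑(i * k + y) : ℚ_[p])) = (y:ℚ_[p]) + ((i*k:ℕ):ℚ_[p]) := by push_cast; ring
    rw [h1, h2]
    ring
  have hsum1 : (∑ i ∈ range p, (-1:ℚ_[p])^i) = 1 := by
    rw [neg_one_geom_sum, if_neg (Nat.not_even_iff_odd.mpr hp)]
  have hdiff : (∑ y ∈ range (p ^ N), (-1 : ℚ_[p]) ^ y * (x + (y : ℚ_[p])) ^ n)
      - (∑ y ∈ range (p ^ (N+1)), (-1 : ℚ_[p]) ^ y * (x + (y : ℚ_[p])) ^ n)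
      = ∑ i ∈ range p, (-1:ℚ_[p]) ^ i *
          ∑ y ∈ range k, (-1:ℚ_[p]) ^ y *
            ((x + (y:ℚ_[p])) ^ n - (x + (y:ℚ_[p]) + ((i * k : ℕ):ℚ_[p])) ^ n) := by
    rw [hdecomp]
    rw [show (∑ y ∈ range (p ^ N), (-1 : ℚ_[p]) ^ y * (x + (y : ℚ_[p])) ^ n)
      = (∑ i ∈ range p, (-1:ℚ_[p])^i) * ∑ y ∈ range k, (-1 : ℚ_[p]) ^ y * (x + (y : ℚ_[p])) ^ n
      from by rw [hsum1, one_mul, hk], Finset.sum_mul, ← Finset.sum_sub_distrib]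
    apply Finset.sum_congr rfl
    intro i _
    rw [← mul_sub, ← Finset.sum_sub_distrib]
    congr 1
    apply Finset.sum_congr rfl
    intro y _
    ring
  rw [hdiff]
  apply IsUltrametricDist.norm_sum_le_of_forall_le_of_nonneg (by positivity)
  intro i hi
  rw [norm_mul, norm_pow, norm_neg, norm_one, one_pow, one_mul]
  apply IsUltrametricDist.norm_sum_le_of_forall_le_of_nonneg (by positivity)
  intro y hy
  rw [norm_mul, norm_pow, norm_neg, norm_one, one_pow, one_mul]
  exact hbound y i hy hi


/-- Let `p` be an odd prime, `n : ℕ` and `x : ℚ_[p]`. Then the limits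
`L₁ = lim_N ∑_{y=0}^{p^N-1} (-1)^y (x+y+1)^n` and `L₂ = lim_N ∑_{y=0}^{p^N-1} (-1)^y (x+y)^n`
exist in `ℚ_[p]` and satisfy `L₁ + L₂ = 2 x^n`; that is,
`∫_{ℤ_p} (x+y+1)^n dμ₋₁(y) + ∫_{ℤ_p} (x+y)^n dμ₋₁(y) = 2 x^n`. -/
theorem fermionic_integral_add_shift_eq_two_pow (p : ℕ) [Fact p.Prime] (hp : Odd p)
    (n : ℕ) (x : ℚ_[p]) :
    ∃ L₁ L₂ : ℚ_[p],
      Tendsto (fun N : ℕ => ∑ y ∈ Finset.range (p ^ N),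
          (-1 : ℚ_[p]) ^ y * (x + (y : ℚ_[p]) + 1) ^ n) atTop (nhds L₁) ∧
      Tendsto (fun N : ℕ => ∑ y ∈ Finset.range (p ^ N),
          (-1 : ℚ_[p]) ^ y * (x + (y : ℚ_[p])) ^ n) atTop (nhds L₂) ∧
      L₁ + L₂ = 2 * x ^ n := by
  obtain ⟨L₂, hL₂⟩ := cauchySeq_tendsto_of_complete (key_cauchy p hp n x)
  obtain ⟨L₁, hL₁'⟩ := cauchySeq_tendsto_of_complete (key_cauchy p hp n (x + 1))
  have hfun : (fun N : ℕ => ∑ y ∈ Finset.range (p ^ N),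
      (-1 : ℚ_[p]) ^ y * (x + (y : ℚ_[p]) + 1) ^ n)
      = (fun N : ℕ => ∑ y ∈ Finset.range (p ^ N),
      (-1 : ℚ_[p]) ^ y * (x + 1 + (y : ℚ_[p])) ^ n) := by
    funext N
    exact Finset.sum_congr rfl fun y _ => by ring
  have hL₁ : Tendsto (fun N : ℕ => ∑ y ∈ Finset.range (p ^ N),
      (-1 : ℚ_[p]) ^ y * (x + (y : ℚ_[p]) + 1) ^ n) atTop (nhds L₁) := by
    rw [hfun]; exact hL₁'
  refine ⟨L₁, L₂, hL₁, hL₂, ?_⟩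
  -- pairing identity at each level N
  have hpair : ∀ N : ℕ, (∑ y ∈ Finset.range (p ^ N),
        (-1 : ℚ_[p]) ^ y * (x + (y : ℚ_[p]) + 1) ^ n)
      + (∑ y ∈ Finset.range (p ^ N), (-1 : ℚ_[p]) ^ y * (x + (y : ℚ_[p])) ^ n)
      = x ^ n + (x + ((p:ℚ_[p])) ^ N) ^ n := by
    intro N
    set u : ℕ → ℚ_[p] := fun y => (-1 : ℚ_[p]) ^ y * (x + (y : ℚ_[p])) ^ n with hu
    have h1 : (∑ y ∈ Finset.range (p ^ N), (-1 : ℚ_[p]) ^ y * (x + (y : ℚ_[p]) + 1) ^ n)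
        = -∑ y ∈ Finset.range (p ^ N), u (y + 1) := by
      rw [← Finset.sum_neg_distrib]
      apply Finset.sum_congr rfl
      intro y _
      rw [hu]
      push_cast
      ring
    have h2 : (∑ y ∈ Finset.range (p ^ N), u (y + 1))
        = (∑ y ∈ Finset.range (p ^ N), u y) + u (p ^ N) - u 0 := by
      have := Finset.sum_range_succ' u (p ^ N)
      rw [Finset.sum_range_succ] at this
      linear_combination -this
    have hu0 : u 0 = x ^ n := by simp [hu]
    have huM : u (p ^ N) = -(x + ((p:ℚ_[p])) ^ N) ^ n := by
      simp only [hu]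
      rw [(hp.pow (n := N)).neg_one_pow]
      push_cast
      ring
    rw [h1, h2, hu0, huM]
    ring
  have hcast : Tendsto (fun N : ℕ => ((p:ℚ_[p])) ^ N) atTop (nhds 0) := by
    apply tendsto_pow_atTop_nhds_zero_of_norm_lt_one
    rw [Padic.norm_p]
    have hp2 : (2:ℕ) ≤ p := (Fact.out : p.Prime).two_le
    rw [inv_lt_one_iff₀]
    right
    exact_mod_cast Nat.lt_of_lt_of_le one_lt_two hp2
  have hrhs : Tendsto (fun N : ℕ => x ^ n + (x + ((p:ℚ_[p])) ^ N) ^ n) atTop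
      (nhds (2 * x ^ n)) := by
    have hcont : Continuous fun t : ℚ_[p] => x ^ n + (x + t) ^ n := by continuity
    have := (hcont.tendsto 0).comp hcast
    simpa [two_mul, Function.comp_def] using this
  have hlhs := hL₁.add hL₂
  rw [show (2 : ℚ_[p]) * x ^ n = 2 * x ^ n from rfl]
  exact tendsto_nhds_unique (hlhs.congr fun N => (hpair N)) hrhs
end
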